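/- Let G be a group acting linearly on a K-module V (a representation (V,G)), and suppose G is generated by a set M. If for every sequence (h_1,...,h_n) of elements of M we have x∘(h_1−1)(h_2−1)⋯(h_n−1)=0 for all x∈V (where the group-algebra action is used), then the representation satisfies the identity x∘(y_1−1)⋯(y_n−1)≡0 for all y_1,...,y_n ∈ G and all x ∈ V. -/

import Mathlib

section Aux

variable {K V G : Type*} [Field K] [AddCommGroup V] [Module K V] [Group G]

/-- The submodule of vectors killed by every length-`k` product of operators
`ρ m - 1` with `m ∈ M`. -/
def unitriAux (ρ : Representation K G V) (M : Set G) (k : ℕ) : Submodule K V where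
  carrier := {v | ∀ l : List G, l.length = k → (∀ g ∈ l, g ∈ M) →
    ((l.map (fun g => (ρ g - 1 : Module.End K V))).prod) v = 0}
  add_mem' := by
    intro a b ha hb l hl hm
    rw [map_add, ha l hl hm, hb l hl hm, add_zero]
  zero_mem' := by
    intro l hl hm; exact map_zero _
  smul_mem' := by
    intro c v hv l hl hm
    rw [map_smul, hv l hl hm, smul_zero]

variable {ρ : Representation K G V} {M : Set G}

lemma unitriAux_mem {k : ℕ} {v : V} :
    v ∈ unitriAux ρ M k ↔ ∀ l : List G, l.length = k → (∀ g ∈ l, g ∈ M) →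
      ((l.map (fun g => (ρ g - 1 : Module.End K V))).prod) v = 0 := Iff.rfl

lemma unitriAux_zero {v : V} (hv : v ∈ unitriAux ρ M 0) : v = 0 := by
  have := hv [] rfl (by simp)
  simpa using this

lemma unitriAux_mono {k : ℕ} : unitriAux ρ M k ≤ unitriAux ρ M (k + 1) := by
  intro v hv l hl hm
  rcases l with _ | ⟨g, t⟩
  · simp at hl
  · have ht : t.length = k := by simpa using hl
    have := hv t ht (fun x hx => hm x (List.mem_cons_of_mem _ hx))
    simp only [List.map_cons, List.prod_cons, Module.End.mul_apply, this, map_zero]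

lemma unitriAux_stepM {k : ℕ} {m : G} (hm : m ∈ M) {v : V}
    (hv : v ∈ unitriAux ρ M (k + 1)) :
    ((ρ m - 1 : Module.End K V)) v ∈ unitriAux ρ M k := by
  intro l hl hml
  have key : ((l.map (fun g => (ρ g - 1 : Module.End K V))).prod)
      (((ρ m - 1 : Module.End K V)) v)
      = (((l ++ [m]).map (fun g => (ρ g - 1 : Module.End K V))).prod) v := by
    simp [List.map_append, List.prod_append, Module.End.mul_apply]
  rw [key]
  exact hv (l ++ [m]) (by simp [hl]) (by
    intro g hg
    rcases List.mem_append.mp hg with h1 | h2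
    · exact hml g h1
    · simp at h2; subst h2; exact hm)

lemma unitriAux_invariant (hM : Subgroup.closure M = ⊤) :
    ∀ k : ℕ, ∀ g : G, ∀ v ∈ unitriAux ρ M k, ρ g v ∈ unitriAux ρ M k := by
  intro k
  induction k with
  | zero =>
    intro g v hv
    rw [unitriAux_zero hv, map_zero]
    exact Submodule.zero_mem _
  | succ k ih =>
    -- prove the stronger statement for g and g⁻¹ simultaneously
    have key : ∀ g : G, (∀ v ∈ unitriAux ρ M (k + 1), ρ g v ∈ unitriAux ρ M (k + 1)) ∧
        (∀ v ∈ unitriAux ρ M (k + 1), ρ g⁻¹ v ∈ unitriAux ρ M (k + 1)) := by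
      intro g
      have hg : g ∈ Subgroup.closure M := by rw [hM]; trivial
      induction hg using Subgroup.closure_induction with
      | mem m hm =>
        constructor
        · intro v hv
          have h1 : ρ m v = v + ((ρ m - 1 : Module.End K V)) v := by
            simp [LinearMap.sub_apply]
          rw [h1]
          exact Submodule.add_mem _ hv (unitriAux_mono (unitriAux_stepM hm hv))
        · intro v hv
          have h1 : ρ m⁻¹ v = v - ρ m⁻¹ (((ρ m - 1 : Module.End K V)) v) := by
            simp [LinearMap.sub_apply, map_sub]
          rw [h1]
          refine Submodule.sub_mem _ hv (unitriAux_mono ?_)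
          exact ih m⁻¹ _ (unitriAux_stepM hm hv)
      | one =>
        constructor <;> intro v hv <;> simpa using hv
      | mul a b _ _ ha hb =>
        constructor
        · intro v hv
          rw [map_mul]
          exact ha.1 _ (hb.1 v hv)
        · intro v hv
          rw [mul_inv_rev, map_mul]
          exact hb.2 _ (ha.2 v hv)
      | inv a _ ha =>
        exact ⟨ha.2, by simpa using ha.1⟩
    intro g v hv
    exact (key g).1 v hv

lemma unitriAux_stepG (hM : Subgroup.closure M = ⊤) (k : ℕ) (g : G) :
    ∀ v ∈ unitriAux ρ M (k + 1), ((ρ g - 1 : Module.End K V)) v ∈ unitriAux ρ M k := by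
  have key : ∀ g : G,
      (∀ v ∈ unitriAux ρ M (k + 1), ((ρ g - 1 : Module.End K V)) v ∈ unitriAux ρ M k) ∧
      (∀ v ∈ unitriAux ρ M (k + 1), ((ρ g⁻¹ - 1 : Module.End K V)) v ∈ unitriAux ρ M k) := by
    intro g
    have hg : g ∈ Subgroup.closure M := by rw [hM]; trivial
    have inv_formula : ∀ (a : G) (v : V),
        ((ρ a⁻¹ - 1 : Module.End K V)) v = -(ρ a⁻¹ (((ρ a - 1 : Module.End K V)) v)) := by
      intro a v
      simp only [LinearMap.sub_apply, Module.End.one_apply, map_sub]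
      rw [← Module.End.mul_apply, ← map_mul]
      simp
    induction hg using Subgroup.closure_induction with
    | mem m hm =>
      refine ⟨fun v hv => unitriAux_stepM hm hv, fun v hv => ?_⟩
      rw [inv_formula]
      exact Submodule.neg_mem _
        (unitriAux_invariant hM k m⁻¹ _ (unitriAux_stepM hm hv))
    | one =>
      constructor <;> intro v hv <;> simpa using Submodule.zero_mem (unitriAux ρ M k)
    | mul a b _ _ ha hb =>
      have mul_formula : ∀ (a b : G) (v : V),
          ((ρ (a * b) - 1 : Module.End K V)) v
            = ρ a (((ρ b - 1 : Module.End K V)) v) + ((ρ a - 1 : Module.End K V)) v := by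
        intro a b v
        simp [LinearMap.sub_apply, map_sub, map_mul, Module.End.mul_apply]
      constructor
      · intro v hv
        rw [mul_formula]
        exact Submodule.add_mem _
          (unitriAux_invariant hM k a _ (hb.1 v hv)) (ha.1 v hv)
      · intro v hv
        rw [mul_inv_rev, mul_formula]
        exact Submodule.add_mem _
          (unitriAux_invariant hM k b⁻¹ _ (ha.2 v hv)) (hb.2 v hv)
    | inv a _ ha =>
      exact ⟨ha.2, by simpa using ha.1⟩
  exact (key g).1

lemma unitriAux_list (hM : Subgroup.closure M = ⊤) :
    ∀ (l : List G) (k : ℕ) (v : V), v ∈ unitriAux ρ M (l.length + k) →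
      ((l.map (fun g => (ρ g - 1 : Module.End K V))).prod) v ∈ unitriAux ρ M k := by
  intro l
  induction l with
  | nil => intro k v hv; simpa using hv
  | cons g t ih =>
    intro k v hv
    have hv' : v ∈ unitriAux ρ M (t.length + (k + 1)) := by
      convert hv using 2
      simp; omega
    have h1 := ih (k + 1) v hv'
    have h2 := unitriAux_stepG hM k g _ h1
    simpa [List.map_cons, List.prod_cons, Module.End.mul_apply] using h2

end Aux

theorem generators_unitriangular_implies_identity
    {K V G : Type*} [Field K] [AddCommGroup V] [Module K V] [Group G]
    (ρ : Representation K G V) (M : Set G) (hM : Subgroup.closure M = ⊤) (n : ℕ)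
    (h : ∀ l : List G, l.length = n → (∀ g ∈ l, g ∈ M) →
      ∀ v : V, ((l.map (fun g => (ρ g - 1 : Module.End K V))).prod) v = 0) :
    ∀ l : List G, l.length = n →
      ∀ v : V, ((l.map (fun g => (ρ g - 1 : Module.End K V))).prod) v = 0 := by
  intro l hl v
  have hv : v ∈ unitriAux ρ M (l.length + 0) := by
    intro l' hl' hm'
    exact h l' (by omega) hm' v
  exact unitriAux_zero (unitriAux_list hM l 0 v hv)
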